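/- Let G be a connected graph, U the quaternionic transition matrix with entries U_{ef} = q(e) if t(f) = o(e) and f ≠ e^{-1}, U_{ef} = q(e) - 1 if f = e^{-1}, and 0 otherwise, where q: D(G) → H. If U is unitary, then the diagonal condition ((UU*)_{ee} = 1) is equivalent to |q(e)|^2 = 2 Re(q(e)) / deg(o(e)), i.e. q0(e)^2 + q1(e)^2 + q2(e)^2 + q3(e)^2 - 2 q0(e)/d_{o(e)} = 0 for every arc e. -/

import Mathlib

open Matrix

variable {V : Type*} [Fintype V] [DecidableEq V]

/-- The quaternionic transition matrix of a graph, indexed by arcs (darts):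
`U e f = q e` if `t(f) = o(e)` and `f ≠ e⁻¹`, `q e - 1` if `f = e⁻¹`, `0` otherwise. -/
noncomputable def transMatrix (G : SimpleGraph V) [DecidableRel G.Adj]
    (q : G.Dart → Quaternion ℝ) : Matrix G.Dart G.Dart (Quaternion ℝ) :=
  fun e f => if f = e.symm then q e - 1 else if f.snd = e.fst then q e else 0

/-- The diagonal condition `(U U*)_{ee} = 1` is equivalent to
`q0(e)² + q1(e)² + q2(e)² + q3(e)² - 2 q0(e)/d_{o(e)} = 0`. -/
theorem transMatrix_diag_unitary_condition (G : SimpleGraph V) [DecidableRel G.Adj]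
    (hG : G.Connected) (q : G.Dart → Quaternion ℝ) (e : G.Dart) :
    ((transMatrix G q * (transMatrix G q)ᴴ) e e = 1) ↔
      (q e).re ^ 2 + (q e).imI ^ 2 + (q e).imJ ^ 2 + (q e).imK ^ 2 -
        2 * (q e).re / (G.degree e.fst : ℝ) = 0 := by
  classical
  have hd : 0 < G.degree e.fst := by
    rw [SimpleGraph.degree_pos_iff_exists_adj]
    exact ⟨e.snd, e.adj⟩
  have hcard : (Finset.univ.filter fun f : G.Dart => f.snd = e.fst).card = G.degree e.fst := by
    rw [← G.dart_fst_fiber_card_eq_degree e.fst]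
    apply Finset.card_nbij' (fun f => f.symm) (fun f => f.symm) <;>
      simp [SimpleGraph.Dart.ext_iff, funext_iff, Set.MapsTo, Set.LeftInvOn, Set.RightInvOn]
  have hmem : e.symm ∈ Finset.univ.filter fun f : G.Dart => f.snd = e.fst := by
    simp [SimpleGraph.Dart.symm]
  have key : (transMatrix G q * (transMatrix G q)ᴴ) e e
      = (q e - 1) * star (q e - 1) +
        ((G.degree e.fst - 1 : ℕ) : Quaternion ℝ) * (q e * star (q e)) := by
    rw [Matrix.mul_apply]
    have hterm : ∀ f : G.Dart, transMatrix G q e f * (transMatrix G q)ᴴ f e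
        = if f = e.symm then (q e - 1) * star (q e - 1)
          else if f.snd = e.fst then q e * star (q e) else 0 := by
      intro f
      rw [Matrix.conjTranspose_apply]
      unfold transMatrix
      split_ifs <;> simp
    simp only [hterm]
    rw [← Finset.sum_erase_add _ _ (Finset.mem_univ e.symm), if_pos rfl]
    rw [Finset.sum_congr rfl (fun x hx => if_neg (Finset.mem_erase.mp hx).1),
      ← Finset.sum_filter, Finset.sum_const, nsmul_eq_mul]
    have hfe : (Finset.univ.erase e.symm).filter (fun f : G.Dart => f.snd = e.fst)
        = (Finset.univ.filter fun f : G.Dart => f.snd = e.fst).erase e.symm := by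
      ext f; simp [Finset.mem_erase, and_comm]
    rw [hfe, Finset.card_erase_of_mem hmem, hcard, add_comm]
  have hstar : ∀ a : Quaternion ℝ, a * star a = ((Quaternion.normSq a : ℝ) : Quaternion ℝ) := by
    intro a; rw [Quaternion.mul_star_eq_coe]; rfl
  have hreal : (transMatrix G q * (transMatrix G q)ᴴ) e e
      = (((G.degree e.fst : ℝ) * Quaternion.normSq (q e) - 2 * (q e).re + 1 : ℝ) : Quaternion ℝ) := by
    rw [key, hstar, hstar]
    have hsub : Quaternion.normSq (q e - 1)
        = Quaternion.normSq (q e) - 2 * (q e).re + 1 := by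
      simp only [Quaternion.normSq_def', Quaternion.re_sub, Quaternion.imI_sub,
        Quaternion.imJ_sub, Quaternion.imK_sub, Quaternion.re_one, Quaternion.imI_one,
        Quaternion.imJ_one, Quaternion.imK_one]
      ring
    have hcast : ((G.degree e.fst - 1 : ℕ) : Quaternion ℝ)
        = (((G.degree e.fst : ℝ) - 1 : ℝ) : Quaternion ℝ) := by
      push_cast [Nat.cast_sub hd]
      rfl
    rw [hsub, hcast, ← Quaternion.coe_mul, ← Quaternion.coe_add]
    congr 1
    ring
  rw [hreal]
  have hd' : ((G.degree e.fst : ℝ)) ≠ 0 := by positivity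
  rw [show ((1 : Quaternion ℝ)) = ((1 : ℝ) : Quaternion ℝ) from rfl,
    Quaternion.coe_inj, ← Quaternion.normSq_def']
  constructor
  · intro h
    field_simp
    linarith [mul_comm ((G.degree e.fst : ℝ)) (Quaternion.normSq (q e))]
  · intro h
    field_simp at h
    linarith [mul_comm ((G.degree e.fst : ℝ)) (Quaternion.normSq (q e))]
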